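/- Let τ > 0, θ ∈ ℝ, and let v : ℝ → ℂ be continuously differentiable on [0, τ]. Then |θ ∫_{0}^{τ} e^{i(τ−s)θ} v(s) ds| ≤ 2 sup_{s ∈ [0,τ]} |v(s)| + τ sup_{s ∈ [0,τ]} |v'(s)|. -/

import Mathlib

open intervalIntegral Set Complex

lemma duhamel_exp_hasDerivAt (τ θ : ℝ) (s : ℝ) :
    HasDerivAt (fun s : ℝ => Complex.exp (Complex.I * ((τ : ℂ) - (s : ℂ)) * (θ : ℂ)))
      (-(Complex.I * (θ : ℂ)) *
        Complex.exp (Complex.I * ((τ : ℂ) - (s : ℂ)) * (θ : ℂ))) s := by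
  have h : HasDerivAt (fun z : ℂ => Complex.exp (Complex.I * ((τ : ℂ) - z) * (θ : ℂ)))
      (-(Complex.I * (θ : ℂ)) *
        Complex.exp (Complex.I * ((τ : ℂ) - (s : ℂ)) * (θ : ℂ))) (s : ℂ) := by
    have h1 : HasDerivAt (fun z : ℂ => Complex.I * ((τ : ℂ) - z) * (θ : ℂ))
        (-(Complex.I * (θ : ℂ))) (s : ℂ) := by
      have := (((hasDerivAt_id (s : ℂ)).const_sub (τ : ℂ)).const_mul Complex.I).mul_const
        (θ : ℂ)
      simpa using this
    simpa [mul_comm] using h1.cexp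
  exact h.comp_ofReal

/-- Single-Fourier-mode form of the `H²`-bound on the Duhamel integral
`u₁ = −i∫_0^τ e^{i(τ−s)Δ} v(s) ds` (inequality (3.23) of the paper):
`|θ ∫_0^τ e^{i(τ−s)θ} v(s) ds| ≤ 2 sup |v| + τ sup |v'|`. -/
theorem duhamel_symbol_bound (τ θ : ℝ) (hτ : 0 < τ) (v v' : ℝ → ℂ)
    (hderiv : ∀ s ∈ Set.Icc (0:ℝ) τ, HasDerivWithinAt v (v' s) (Set.Icc (0:ℝ) τ) s)
    (hcont : ContinuousOn v' (Set.Icc (0:ℝ) τ)) :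
    ‖(θ : ℂ) *
        ∫ s in (0:ℝ)..τ, Complex.exp (Complex.I * ((τ : ℂ) - (s : ℂ)) * (θ : ℂ)) * v s‖
      ≤ 2 * (⨆ s : Set.Icc (0:ℝ) τ, ‖(v s)‖)
        + τ * (⨆ s : Set.Icc (0:ℝ) τ, ‖(v' s)‖) := by
  set u : ℝ → ℂ := fun s => Complex.exp (Complex.I * ((τ : ℂ) - (s : ℂ)) * (θ : ℂ)) with hu
  set u' : ℝ → ℂ := fun s => -(Complex.I * (θ : ℂ)) * u s with hu'
  have huIcc : Set.uIcc (0:ℝ) τ = Set.Icc 0 τ := Set.uIcc_of_le hτ.le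
  have hunorm : ∀ s : ℝ, ‖u s‖ = 1 := by
    intro s
    simp [hu, Complex.norm_exp, Complex.mul_re, Complex.mul_im]
  have hucont : Continuous u := by
    continuity
  have huderiv : ∀ s ∈ Set.uIcc (0:ℝ) τ, HasDerivWithinAt u (u' s) (Set.uIcc (0:ℝ) τ) s :=
    fun s _ => (duhamel_exp_hasDerivAt τ θ s).hasDerivWithinAt
  have hvcont : ContinuousOn v (Set.Icc 0 τ) := fun s hs => (hderiv s hs).continuousWithinAt
  have hv'int : IntervalIntegrable v' MeasureTheory.volume 0 τ :=
    (by rw [huIcc] at *; exact hcont : ContinuousOn v' (Set.uIcc 0 τ)).intervalIntegrable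
  have hu'int : IntervalIntegrable u' MeasureTheory.volume 0 τ :=
    ((continuous_const.mul hucont)).intervalIntegrable 0 τ
  have hibp := intervalIntegral.integral_deriv_mul_eq_sub_of_hasDerivWithinAt
    huderiv (fun s hs => by rw [huIcc] at *; exact hderiv s hs) hu'int hv'int
  -- ∫ u' v + u v' = u τ * v τ - u 0 * v 0
  have hint_uv' : IntervalIntegrable (fun s => u s * v' s) MeasureTheory.volume 0 τ :=
    (by rw [huIcc]; exact hucont.continuousOn.mul hcont :
      ContinuousOn (fun s => u s * v' s) (Set.uIcc 0 τ)).intervalIntegrable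
  have hint_u'v : IntervalIntegrable (fun s => u' s * v s) MeasureTheory.volume 0 τ :=
    (by rw [huIcc]; exact (continuous_const.mul hucont).continuousOn.mul hvcont :
      ContinuousOn (fun s => u' s * v s) (Set.uIcc 0 τ)).intervalIntegrable
  rw [intervalIntegral.integral_add hint_u'v hint_uv'] at hibp
  have hsplit : ∫ s in (0:ℝ)..τ, u' s * v s
      = -(Complex.I * (θ : ℂ)) * ∫ s in (0:ℝ)..τ, u s * v s := by
    rw [← intervalIntegral.integral_const_mul]
    congr 1; ext s; ring
  -- Main identity
  have key : (θ : ℂ) * ∫ s in (0:ℝ)..τ, u s * v s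
      = Complex.I * (u τ * v τ - u 0 * v 0 - ∫ s in (0:ℝ)..τ, u s * v' s) := by
    have h1 : -(Complex.I * (θ : ℂ)) * ∫ s in (0:ℝ)..τ, u s * v s
        = u τ * v τ - u 0 * v 0 - ∫ s in (0:ℝ)..τ, u s * v' s := by
      rw [← hsplit]; linear_combination hibp
    have h2 := congrArg (fun z => Complex.I * z) h1
    rw [← h2]
    have : Complex.I * (-(Complex.I * (θ:ℂ))) = (θ:ℂ) := by
      simp [mul_comm, mul_assoc, Complex.I_mul_I]; ring_nf; simp [Complex.I_sq]
    rw [← mul_assoc, this]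
  -- sup bounds
  set M : ℝ := ⨆ s : Set.Icc (0:ℝ) τ, ‖v s‖ with hM
  set M' : ℝ := ⨆ s : Set.Icc (0:ℝ) τ, ‖v' s‖ with hM'
  have hne : (Set.Icc (0:ℝ) τ).Nonempty := Set.nonempty_Icc.mpr hτ.le
  have hbddM : BddAbove (Set.range fun s : Set.Icc (0:ℝ) τ => ‖v s‖) := by
    have h := (isCompact_Icc.image_of_continuousOn (continuous_norm.comp_continuousOn
      hvcont)).bddAbove
    rwa [Set.image_eq_range] at h
  have hbddM' : BddAbove (Set.range fun s : Set.Icc (0:ℝ) τ => ‖v' s‖) := by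
    have h := (isCompact_Icc.image_of_continuousOn (continuous_norm.comp_continuousOn
      hcont)).bddAbove
    rwa [Set.image_eq_range] at h
  have hleM : ∀ s ∈ Set.Icc (0:ℝ) τ, ‖v s‖ ≤ M :=
    fun s hs => le_ciSup hbddM ⟨s, hs⟩
  have hleM' : ∀ s ∈ Set.Icc (0:ℝ) τ, ‖v' s‖ ≤ M' :=
    fun s hs => le_ciSup hbddM' ⟨s, hs⟩
  have hM'0 : 0 ≤ M' := le_trans (norm_nonneg _) (hleM' 0 (by constructor <;> linarith))
  -- integral bound
  have hIbound : ‖∫ s in (0:ℝ)..τ, u s * v' s‖ ≤ τ * M' := by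
    have := intervalIntegral.norm_integral_le_of_norm_le_const
      (C := M') (f := fun s => u s * v' s) (a := (0:ℝ)) (b := τ) ?_
    · simpa [abs_of_pos hτ, mul_comm] using this
    · intro x hx
      rw [Set.uIoc_of_le hτ.le] at hx
      have hx' : x ∈ Set.Icc (0:ℝ) τ := ⟨hx.1.le, hx.2⟩
      calc ‖u x * v' x‖ = ‖u x‖ * ‖v' x‖ := by
            rw [norm_mul]
        _ = ‖v' x‖ := by rw [hunorm x, one_mul]
        _ ≤ M' := hleM' x hx'
  calc ‖(θ : ℂ) * ∫ s in (0:ℝ)..τ, u s * v s‖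
      = ‖u τ * v τ - u 0 * v 0 - ∫ s in (0:ℝ)..τ, u s * v' s‖ := by
        rw [key, norm_mul, Complex.norm_I, one_mul]
    _ ≤ ‖u τ * v τ - u 0 * v 0‖ + ‖∫ s in (0:ℝ)..τ, u s * v' s‖ := by
        exact (norm_sub_le _ _)
    _ ≤ (‖u τ * v τ‖ + ‖u 0 * v 0‖)
          + ‖∫ s in (0:ℝ)..τ, u s * v' s‖ := by
        gcongr; exact norm_sub_le _ _
    _ ≤ (M + M) + τ * M' := by
        refine add_le_add (add_le_add ?_ ?_) hIbound
        · rw [norm_mul, hunorm, one_mul]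
          exact hleM τ ⟨hτ.le, le_refl τ⟩
        · rw [norm_mul, hunorm, one_mul]
          exact hleM 0 ⟨le_refl 0, hτ.le⟩
    _ = 2 * M + τ * M' := by ring
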